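/- If Z : [0,T] → ℝ is twice continuously differentiable with Z(t) ≥ ε > 0, F_Z = Z'/Z, and the measured acceleration satisfies a(t) = −Z''(t) + g for a constant g, then with E_Z(t) = exp(∫₀ᵗ F_Z) − 1 − t F_Z(0), Δ{a}(t) = ∫₀ᵗ∫₀^λ a(μ)dμdλ, and Δ{1}(t) = t²/2, the pair (Z(0), g) satisfies E_Z(t)·Z(0) + Δ{a}(t) − (t²/2)·g = 0 for all t ∈ [0,T]; i.e., the residual in the least-squares problem of equation (11) vanishes identically at the true depth and gravity. -/

import Mathlib

/-- the residual of the least-squares problem vanishes identically at the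
true depth `Z 0` and gravity `g` when the measured acceleration is `a = -Z'' + g`. -/
theorem tau_stmt4 (T ε : ℝ) (hε : 0 < ε) (Z Z' Z'' a : ℝ → ℝ) (g : ℝ)
    (hderiv : ∀ t ∈ Set.Icc (0:ℝ) T, HasDerivAt Z (Z' t) t)
    (hderiv' : ∀ t ∈ Set.Icc (0:ℝ) T, HasDerivAt Z' (Z'' t) t)
    (hcont : ContinuousOn Z'' (Set.Icc (0:ℝ) T))
    (hZ : ∀ t ∈ Set.Icc (0:ℝ) T, ε ≤ Z t)
    (ha : ∀ t ∈ Set.Icc (0:ℝ) T, a t = -Z'' t + g) :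
    ∀ t ∈ Set.Icc (0:ℝ) T,
      (Real.exp (∫ l in (0:ℝ)..t, Z' l / Z l) - 1 - t * (Z' 0 / Z 0)) * Z 0
        + (∫ l in (0:ℝ)..t, ∫ m in (0:ℝ)..l, a m) - (t ^ 2 / 2) * g = 0 := by
  intro t ht
  obtain ⟨ht0, htT⟩ := ht
  have h0T : (0:ℝ) ∈ Set.Icc (0:ℝ) T := ⟨le_refl _, le_trans ht0 htT⟩
  have hsub : ∀ s : ℝ, s ∈ Set.Icc (0:ℝ) T → Set.uIcc (0:ℝ) s ⊆ Set.Icc (0:ℝ) T := by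
    intro s hs
    rw [Set.uIcc_of_le hs.1]
    exact Set.Icc_subset_Icc le_rfl hs.2
  have hZpos : ∀ s ∈ Set.Icc (0:ℝ) T, Z s ≠ 0 := fun s hs => ne_of_gt (lt_of_lt_of_le hε (hZ s hs))
  -- continuity of Z and Z' on Icc
  have hZcont : ContinuousOn Z (Set.Icc (0:ℝ) T) := fun s hs =>
    ((hderiv s hs).continuousAt).continuousWithinAt
  have hZ'cont : ContinuousOn Z' (Set.Icc (0:ℝ) T) := fun s hs =>
    ((hderiv' s hs).continuousAt).continuousWithinAt
  -- Step 1: ∫₀ᵗ Z'/Z = log (Z t) - log (Z 0)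
  have hlog : (∫ l in (0:ℝ)..t, Z' l / Z l) = Real.log (Z t) - Real.log (Z 0) := by
    refine intervalIntegral.integral_eq_sub_of_hasDerivAt (f := fun s => Real.log (Z s)) ?_ ?_
    · intro s hs
      exact (hderiv s (hsub t ⟨ht0, htT⟩ hs)).log (hZpos s (hsub t ⟨ht0, htT⟩ hs))
    · apply ContinuousOn.intervalIntegrable
      exact (hZ'cont.mono (hsub t ⟨ht0, htT⟩)).div (hZcont.mono (hsub t ⟨ht0, htT⟩))
        (fun s hs => hZpos s (hsub t ⟨ht0, htT⟩ hs))
  have hexp : Real.exp (∫ l in (0:ℝ)..t, Z' l / Z l) = Z t / Z 0 := by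
    rw [hlog, Real.exp_sub, Real.exp_log (lt_of_lt_of_le hε (hZ t ⟨ht0, htT⟩)),
      Real.exp_log (lt_of_lt_of_le hε (hZ 0 h0T))]
  -- Step 2: inner integral
  have hinner : ∀ l ∈ Set.Icc (0:ℝ) T,
      (∫ m in (0:ℝ)..l, a m) = -(Z' l - Z' 0) + g * l := by
    intro l hl
    have h1 : (∫ m in (0:ℝ)..l, a m) = ∫ m in (0:ℝ)..l, (-Z'' m + g) := by
      apply intervalIntegral.integral_congr
      intro m hm
      exact ha m (hsub l hl hm)
    rw [h1]
    have h2 : (∫ m in (0:ℝ)..l, (-Z'' m + g))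
        = (-(Z' l) + g * l) - (-(Z' 0) + g * 0) := by
      refine intervalIntegral.integral_eq_sub_of_hasDerivAt
        (f := fun s => -(Z' s) + g * s) ?_ ?_
      · intro s hs
        have h2 : HasDerivAt (fun s : ℝ => g * s) g s := by
          simpa using (hasDerivAt_id s).const_mul g
        exact ((hderiv' s (hsub l hl hs)).neg).add h2
      · apply ContinuousOn.intervalIntegrable
        exact ((hcont.mono (hsub l hl)).neg).add continuousOn_const
    rw [h2]; ring
  -- Step 3: outer integral
  have houter : (∫ l in (0:ℝ)..t, ∫ m in (0:ℝ)..l, a m)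
      = -(Z t - Z 0) + Z' 0 * t + g * t ^ 2 / 2 := by
    have h1 : (∫ l in (0:ℝ)..t, ∫ m in (0:ℝ)..l, a m)
        = ∫ l in (0:ℝ)..t, (-(Z' l - Z' 0) + g * l) := by
      apply intervalIntegral.integral_congr
      intro l hl
      exact hinner l (hsub t ⟨ht0, htT⟩ hl)
    rw [h1]
    have h2 : (∫ l in (0:ℝ)..t, (-(Z' l - Z' 0) + g * l))
        = (-(Z t) + Z' 0 * t + g * t ^ 2 / 2) - (-(Z 0) + Z' 0 * 0 + g * 0 ^ 2 / 2) := by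
      refine intervalIntegral.integral_eq_sub_of_hasDerivAt
        (f := fun s => -(Z s) + Z' 0 * s + g * s ^ 2 / 2) ?_ ?_
      · intro s hs
        have hd : HasDerivAt (fun s : ℝ => g * s ^ 2 / 2) (g * s) s := by
          have : HasDerivAt (fun s : ℝ => s ^ 2) (2 * s) s := by
            simpa using (hasDerivAt_pow 2 s)
          have := ((this.const_mul g).div_const 2)
          exact this.congr_deriv (by ring)
        have h2 : HasDerivAt (fun s : ℝ => Z' 0 * s) (Z' 0) s := by
          simpa using (hasDerivAt_id s).const_mul (Z' 0)
        have H := (((hderiv s (hsub t ⟨ht0, htT⟩ hs)).neg).add h2).add hd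
        exact H.congr_deriv (by ring)
      · apply ContinuousOn.intervalIntegrable
        refine ContinuousOn.add ?_ (Continuous.continuousOn (by continuity))
        exact (((hZ'cont.mono (hsub t ⟨ht0, htT⟩)).sub continuousOn_const).neg)
    rw [h2]; ring
  rw [hexp, houter]
  have hZ0 : Z 0 ≠ 0 := hZpos 0 h0T
  field_simp
  ring
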